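/- Let α > 0 and σ > 0 be real numbers with α²σ² < 4. Then every complex root λ of the polynomial (λ − 1)² + α²σ²λ = λ² + (α²σ² − 2)λ + 1 satisfies |λ| = 1. In particular, Gauss–Seidel (alternating) gradient descent on a bilinear game never converges but produces a limit cycle when ασ < 2 for every singular value σ. -/

import Mathlib

/-- Gauss–Seidel gradient descent on a bilinear game: if `α²σ² < 4`, every
complex root `λ` of the characteristic polynomial
`(λ − 1)² + α²σ²λ = λ² + (α²σ² − 2)λ + 1` has modulus exactly `1`, so GS GD
never converges but stays on a limit cycle. -/
theorem gauss_seidel_gd_limit_cycle (α σ : ℝ) (hα : 0 < α) (hσ : 0 < σ)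
    (h : α ^ 2 * σ ^ 2 < 4) :
    ∀ z : ℂ, (z - 1) ^ 2 + (α : ℂ) ^ 2 * (σ : ℂ) ^ 2 * z = 0 → ‖z‖ = 1 := by
  intro z hz
  set c : ℝ := α ^ 2 * σ ^ 2 with hc
  have hc0 : 0 < c := by positivity
  set x := z.re
  set y := z.im
  have hre : x ^ 2 - y ^ 2 - 2 * x + 1 + c * x = 0 := by
    have := congrArg Complex.re hz
    simp [Complex.ext_iff, Complex.sub_re, Complex.mul_re, Complex.mul_im, pow_two] at this
    ring_nf at this ⊢
    nlinarith [this]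
  have him : 2 * x * y - 2 * y + c * y = 0 := by
    have := congrArg Complex.im hz
    simp [Complex.ext_iff, Complex.sub_re, Complex.mul_re, Complex.mul_im, pow_two] at this
    ring_nf at this ⊢
    nlinarith [this]
  have key : x ^ 2 + y ^ 2 = 1 := by
    rcases eq_or_ne y 0 with hy | hy
    · rw [hy] at hre ⊢
      nlinarith [sq_nonneg (2 * x - 2 + c)]
    · have h2 : (2 * x - 2 + c) * y = 0 := by linear_combination him
      rcases mul_eq_zero.mp h2 with h3 | h3
      · nlinarith [hre]
      · exact absurd h3 hy
  have : ‖z‖ ^ 2 = 1 := by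
    rw [Complex.sq_norm, Complex.normSq_apply]
    simpa [pow_two] using key
  nlinarith [norm_nonneg z, this]
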